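/- Let H be a Banach space, T > 2, and suppose a sequence of operators satisfies the representation Φ_N = A_N + ∑_{k=0}^{N-1} W_k B_N^k where ‖A_N‖ ≤ C₀/((N+1)·ln²(N+e)), ‖W_k‖ ≤ C₁/((k+1)·ln²(k+1+e)), and ‖B_N^k‖ ≤ C₂/((N-k)·ln²(N-k+e)). Then ‖Φ_N‖ ≤ C₃/((N+1)·ln²(N+e)) for a constant C₃ depending only on C₀, C₁, C₂. -/

import Mathlib

open Real Finset

lemma log_ge_one' {x : ℝ} (hx : 0 ≤ x) : 1 ≤ Real.log (x + Real.exp 1) := by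
  rw [Real.le_log_iff_exp_le (by positivity)]
  linarith

lemma f_pos' {x : ℝ} (hx : 0 ≤ x) : 0 < (x + 1) * Real.log (x + 1 + Real.exp 1) ^ 2 := by
  have h := log_ge_one' (x := x + 1) (by linarith)
  nlinarith

-- telescoping bound
lemma sum_tele (N : ℕ) :
    ∑ k ∈ Finset.range N,
      1 / (((k : ℝ) + 1) * Real.log ((k : ℝ) + 1 + Real.exp 1) ^ 2) ≤ 1 + Real.exp 1 := by
  have he : (0:ℝ) < Real.exp 1 := Real.exp_pos 1
  have key : ∀ k : ℕ,
      1 / (((k : ℝ) + 1) * Real.log ((k : ℝ) + 1 + Real.exp 1) ^ 2) ≤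
      (1 + Real.exp 1) * (1 / Real.log ((k : ℝ) + Real.exp 1)
        - 1 / Real.log ((k : ℝ) + 1 + Real.exp 1)) := by
    intro k
    set a := Real.log ((k : ℝ) + Real.exp 1) with ha
    set b := Real.log ((k : ℝ) + 1 + Real.exp 1) with hb
    have ha1 : 1 ≤ a := log_ge_one' (by positivity)
    have hb1 : 1 ≤ b := log_ge_one' (by positivity)
    have hab : a ≤ b := Real.log_le_log (by positivity) (by linarith)
    have hdiff : 1 / ((k : ℝ) + 1 + Real.exp 1) ≤ b - a := by
      have h1 : Real.log (((k : ℝ) + Real.exp 1) / ((k : ℝ) + 1 + Real.exp 1)) ≤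
          ((k : ℝ) + Real.exp 1) / ((k : ℝ) + 1 + Real.exp 1) - 1 :=
        Real.log_le_sub_one_of_pos (by positivity)
      rw [Real.log_div (by positivity) (by positivity)] at h1
      have h2 : ((k : ℝ) + Real.exp 1) / ((k : ℝ) + 1 + Real.exp 1) - 1
          = -(1 / ((k : ℝ) + 1 + Real.exp 1)) := by
        field_simp
        ring
      rw [h2] at h1
      linarith
    -- goal:  1/((k+1) b^2) ≤ (1+e)(1/a - 1/b)
    have hk : (0:ℝ) ≤ (k:ℝ) := Nat.cast_nonneg k
    have h6 : 1 / a - 1 / b = (b - a) / (a * b) := by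
      field_simp
    rw [h6, mul_div_assoc' (1 + Real.exp 1) (b - a) (a * b),
      div_le_div_iff₀ (by nlinarith) (by nlinarith)]
    have h3 : 1 ≤ (1 + Real.exp 1) * ((k:ℝ) + 1) * (b - a) := by
      have : (k:ℝ) + 1 + Real.exp 1 ≤ (1 + Real.exp 1) * ((k:ℝ) + 1) := by nlinarith
      have h4 : 1 / ((1 + Real.exp 1) * ((k:ℝ) + 1)) ≤ b - a := by
        refine le_trans ?_ hdiff
        apply one_div_le_one_div_of_le (by positivity) this
      have h5 : (0:ℝ) < (1 + Real.exp 1) * ((k:ℝ) + 1) := by positivity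
      rw [div_le_iff₀ h5] at h4
      nlinarith
    have h7 : b ^ 2 ≤ (1 + Real.exp 1) * ((k:ℝ) + 1) * (b - a) * b ^ 2 :=
      le_mul_of_one_le_left (by positivity) h3
    nlinarith [sq_nonneg b]
  calc ∑ k ∈ Finset.range N, 1 / (((k : ℝ) + 1) * Real.log ((k : ℝ) + 1 + Real.exp 1) ^ 2)
      ≤ ∑ k ∈ Finset.range N, (1 + Real.exp 1) * (1 / Real.log ((k : ℝ) + Real.exp 1)
        - 1 / Real.log ((k : ℝ) + 1 + Real.exp 1)) := Finset.sum_le_sum (fun k _ => key k)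
    _ = (1 + Real.exp 1) * ∑ k ∈ Finset.range N, (1 / Real.log ((k : ℝ) + Real.exp 1)
        - 1 / Real.log ((k : ℝ) + 1 + Real.exp 1)) := by rw [Finset.mul_sum]
    _ ≤ 1 + Real.exp 1 := by
        have := Finset.sum_range_sub' (fun k : ℕ => 1 / Real.log ((k : ℝ) + Real.exp 1)) N
        simp only [Nat.cast_add, Nat.cast_one] at this
        rw [this]
        have h0 : Real.log ((0:ℕ) + Real.exp 1) = 1 := by
          norm_num [Real.log_exp]
        have hN : 0 ≤ 1 / Real.log ((N : ℝ) + Real.exp 1) := by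
          have := log_ge_one' (x := (N:ℝ)) (Nat.cast_nonneg N)
          positivity
        rw [h0]
        nlinarith [Real.exp_pos 1]

-- half comparison
lemma half_cmp (N : ℕ) {x : ℝ} (hx1 : 1 ≤ x) (hx : ((N : ℝ) + 1) / 2 ≤ x) :
    ((N : ℝ) + 1) * Real.log ((N : ℝ) + Real.exp 1) ^ 2 ≤
      8 * (x * Real.log (x + Real.exp 1) ^ 2) := by
  have hN : (0:ℝ) ≤ (N:ℝ) := Nat.cast_nonneg N
  have he : (0:ℝ) < Real.exp 1 := Real.exp_pos 1
  have he1 : (1:ℝ) < Real.exp 1 := by nlinarith [Real.add_one_le_exp (1:ℝ)]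
  have hsq : Real.sqrt ((N:ℝ) + Real.exp 1) ≤ x + Real.exp 1 := by
    rw [show x + Real.exp 1 = Real.sqrt ((x + Real.exp 1)^2) from
      (Real.sqrt_sq (by positivity)).symm]
    apply Real.sqrt_le_sqrt
    nlinarith
  have hlog : Real.log ((N:ℝ) + Real.exp 1) / 2 ≤ Real.log (x + Real.exp 1) := by
    have := Real.log_le_log (x := Real.sqrt ((N:ℝ) + Real.exp 1)) (by positivity) hsq
    rwa [Real.log_sqrt (by positivity)] at this
  have hlN : 1 ≤ Real.log ((N:ℝ) + Real.exp 1) := log_ge_one' hN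
  have hlx : 0 ≤ Real.log (x + Real.exp 1) := by linarith
  have hM2 : Real.log ((N:ℝ) + Real.exp 1) ^ 2 / 4 ≤ Real.log (x + Real.exp 1) ^ 2 := by
    nlinarith
  have hmain : (((N:ℝ) + 1) / 2) * (Real.log ((N:ℝ) + Real.exp 1) ^ 2 / 4) ≤
      x * Real.log (x + Real.exp 1) ^ 2 :=
    mul_le_mul hx hM2 (by positivity) (by linarith)
  linarith

/-- Convolution pattern of Lemma 7: if `Φ_N = A_N + ∑_{k<N} W_k B_N^k` with
`‖A_N‖ ≤ C₀/((N+1)ln²(N+e))`, `‖W_k‖ ≤ C₁/((k+1)ln²(k+1+e))` and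
`‖B_N^k‖ ≤ C₂/((N-k)ln²(N-k+e))`, then `‖Φ_N‖ ≤ C₃/((N+1)ln²(N+e))` for a
constant `C₃` depending only on `C₀, C₁, C₂`. -/
theorem convolution_operator_bound
    {H : Type*} [NormedAddCommGroup H] [NormedSpace ℂ H] [CompleteSpace H]
    (T : ℝ) (hT : 2 < T) (C₀ C₁ C₂ : ℝ) (hC₀ : 0 < C₀) (hC₁ : 0 < C₁) (hC₂ : 0 < C₂) :
    ∃ C₃ : ℝ, 0 < C₃ ∧
      ∀ (A W : ℕ → (H →L[ℂ] H)) (B : ℕ → ℕ → (H →L[ℂ] H)) (Φ : ℕ → (H →L[ℂ] H)),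
        (∀ N : ℕ, Φ N = A N + ∑ k ∈ Finset.range N, W k * B N k) →
        (∀ N : ℕ, ‖A N‖ ≤ C₀ / (((N : ℝ) + 1) * (Real.log ((N : ℝ) + Real.exp 1)) ^ 2)) →
        (∀ k : ℕ, ‖W k‖ ≤ C₁ / (((k : ℝ) + 1) * (Real.log ((k : ℝ) + 1 + Real.exp 1)) ^ 2)) →
        (∀ N k : ℕ, k < N →
          ‖B N k‖ ≤ C₂ / (((N : ℝ) - k) * (Real.log ((N : ℝ) - k + Real.exp 1)) ^ 2)) →
        ∀ N : ℕ, ‖Φ N‖ ≤ C₃ / (((N : ℝ) + 1) * (Real.log ((N : ℝ) + Real.exp 1)) ^ 2) := by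
  refine ⟨C₀ + 16 * C₁ * C₂ * (1 + Real.exp 1), by positivity, ?_⟩
  intro A W B Φ hΦ hA hW hB N
  have he : (0:ℝ) < Real.exp 1 := Real.exp_pos 1
  set D := ((N : ℝ) + 1) * Real.log ((N : ℝ) + Real.exp 1) ^ 2 with hDdef
  have hlN : 1 ≤ Real.log ((N:ℝ) + Real.exp 1) := log_ge_one' (Nat.cast_nonneg N)
  have hD0 : 0 < D := by
    have hN : (0:ℝ) ≤ (N:ℝ) := Nat.cast_nonneg N
    nlinarith
  -- abbreviations
  set P : ℕ → ℝ := fun k => ((k : ℝ) + 1) * Real.log ((k : ℝ) + 1 + Real.exp 1) ^ 2 with hPdef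
  set Q : ℕ → ℝ := fun k => ((N : ℝ) - k) * Real.log ((N : ℝ) - k + Real.exp 1) ^ 2 with hQdef
  have hPpos : ∀ k : ℕ, 0 < P k := by
    intro k
    exact f_pos' (Nat.cast_nonneg k)
  have hQpos : ∀ k : ℕ, k < N → 0 < Q k := by
    intro k hk
    have hNk1 : (1:ℝ) ≤ (N:ℝ) - k := by
      have : (k:ℝ) + 1 ≤ (N:ℝ) := by exact_mod_cast hk
      linarith
    have hl : 1 ≤ Real.log ((N:ℝ) - k + Real.exp 1) := by
      have := log_ge_one' (x := (N:ℝ) - k) (by linarith)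
      linarith
    simp only [hQdef]
    nlinarith
  -- per-term key inequality
  have hkey : ∀ k : ℕ, k < N →
      1 / P k * (1 / Q k) ≤ 8 / D * (1 / P k + 1 / Q k) := by
    intro k hk
    have hP := hPpos k
    have hQ := hQpos k hk
    have hNk1 : (1:ℝ) ≤ (N:ℝ) - k := by
      have : (k:ℝ) + 1 ≤ (N:ℝ) := by exact_mod_cast hk
      linarith
    by_cases hc : ((N:ℝ) + 1) / 2 ≤ (k:ℝ) + 1
    · have h8 : D ≤ 8 * P k := half_cmp N (by linarith [(Nat.cast_nonneg k : (0:ℝ) ≤ k)]) hc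
      have h9 : 1 / P k ≤ 8 / D := by
        rw [div_le_div_iff₀ hP hD0]; linarith
      calc 1 / P k * (1 / Q k) ≤ 8 / D * (1 / Q k) :=
            mul_le_mul_of_nonneg_right h9 (by positivity)
        _ ≤ 8 / D * (1 / P k + 1 / Q k) := by
            have h10 : (0:ℝ) ≤ 1 / P k := by positivity
            have h11 : (0:ℝ) ≤ 8 / D := by positivity
            nlinarith
    · push_neg at hc
      have h8 : D ≤ 8 * Q k := half_cmp N hNk1 (by linarith)
      have h9 : 1 / Q k ≤ 8 / D := by
        rw [div_le_div_iff₀ hQ hD0]; linarith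
      calc 1 / P k * (1 / Q k) ≤ 1 / P k * (8 / D) :=
            mul_le_mul_of_nonneg_left h9 (by positivity)
        _ ≤ 8 / D * (1 / P k + 1 / Q k) := by
            have h10 : (0:ℝ) ≤ 1 / Q k := by positivity
            have h11 : (0:ℝ) ≤ 8 / D := by positivity
            nlinarith [le_of_lt hP]
  -- bound the norms termwise
  have hterm : ∀ k ∈ Finset.range N,
      ‖W k‖ * ‖B N k‖ ≤ C₁ * C₂ * (8 / D) * (1 / P k + 1 / Q k) := by
    intro k hk
    rw [Finset.mem_range] at hk
    have hP := hPpos k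
    have hQ := hQpos k hk
    have h1 : ‖W k‖ * ‖B N k‖ ≤ C₁ / P k * (C₂ / Q k) :=
      mul_le_mul (hW k) (hB N k hk) (norm_nonneg _) (div_nonneg hC₁.le hP.le)
    have h2 : C₁ / P k * (C₂ / Q k) = C₁ * C₂ * (1 / P k * (1 / Q k)) := by ring
    have h3 := mul_le_mul_of_nonneg_left (hkey k hk) (by positivity : (0:ℝ) ≤ C₁ * C₂)
    calc ‖W k‖ * ‖B N k‖ ≤ C₁ * C₂ * (1 / P k * (1 / Q k)) := by rw [← h2]; exact h1
      _ ≤ C₁ * C₂ * (8 / D * (1 / P k + 1 / Q k)) := h3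
      _ = C₁ * C₂ * (8 / D) * (1 / P k + 1 / Q k) := by ring
  -- reflect the Q-sum
  have hreflect : ∑ k ∈ Finset.range N, 1 / Q k = ∑ k ∈ Finset.range N, 1 / P k := by
    rw [← Finset.sum_range_reflect (fun k => 1 / Q k) N]
    apply Finset.sum_congr rfl
    intro j hj
    rw [Finset.mem_range] at hj
    have hcast : ((N - 1 - j : ℕ) : ℝ) = (N:ℝ) - 1 - j := by
      have h1 : 1 + j ≤ N := by omega
      have : (N - 1 - j : ℕ) = N - (1 + j) := by omega
      rw [this, Nat.cast_sub h1]
      push_cast; ring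
    simp only [hQdef, hPdef, hcast]
    norm_num
    ring_nf
  -- sum bound
  have hsum : ∑ k ∈ Finset.range N, ‖W k‖ * ‖B N k‖ ≤ 16 * C₁ * C₂ * (1 + Real.exp 1) / D := by
    calc ∑ k ∈ Finset.range N, ‖W k‖ * ‖B N k‖
        ≤ ∑ k ∈ Finset.range N, C₁ * C₂ * (8 / D) * (1 / P k + 1 / Q k) :=
          Finset.sum_le_sum hterm
      _ = C₁ * C₂ * (8 / D) *
          (∑ k ∈ Finset.range N, 1 / P k + ∑ k ∈ Finset.range N, 1 / Q k) := by
          rw [← Finset.mul_sum, Finset.sum_add_distrib]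
      _ ≤ C₁ * C₂ * (8 / D) * ((1 + Real.exp 1) + (1 + Real.exp 1)) := by
          have hS1 : ∑ k ∈ Finset.range N, 1 / P k ≤ 1 + Real.exp 1 := by
            have := sum_tele N
            simp only [hPdef]
            convert this using 2
          have hS2 : ∑ k ∈ Finset.range N, 1 / Q k ≤ 1 + Real.exp 1 := by
            rw [hreflect]; exact hS1
          have : (0:ℝ) ≤ C₁ * C₂ * (8 / D) := by positivity
          nlinarith
      _ = 16 * C₁ * C₂ * (1 + Real.exp 1) / D := by
          field_simp; ring
  -- conclude
  have hnorm : ‖Φ N‖ ≤ ‖A N‖ + ∑ k ∈ Finset.range N, ‖W k‖ * ‖B N k‖ := by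
    rw [hΦ N]
    refine (norm_add_le _ _).trans (add_le_add_right ?_ _)
    exact (norm_sum_le _ _).trans (Finset.sum_le_sum fun k _ => norm_mul_le _ _)
  have hAN := hA N
  calc ‖Φ N‖ ≤ ‖A N‖ + ∑ k ∈ Finset.range N, ‖W k‖ * ‖B N k‖ := hnorm
    _ ≤ C₀ / D + 16 * C₁ * C₂ * (1 + Real.exp 1) / D := add_le_add hAN hsum
    _ = (C₀ + 16 * C₁ * C₂ * (1 + Real.exp 1)) / D := by rw [← add_div]
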